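/- Let L be a normal modal logic, let φ and ψ be ML-formulas, and let σ = sig(φ) ∩ sig(ψ). Then the following are equivalent: (1) there does not exist an L-interpolant for φ and ψ; (2) there exist Kripke models M1, M2 that are models for L and worlds w1 of M1 and w2 of M2 such that M1,w1 ⊨ φ, M2,w2 ⊨ ¬ψ, and M1,w1 ≡_{ML(σ)} M2,w2. -/

import Mathlib

/-- Formulas of propositional modal logic ML, built from propositional
variables (indexed by `ℕ`) using `⊤`, `∧`, `¬` and `◇`. -/
inductive ML : Type
  | top : ML
  | var : ℕ → ML
  | and : ML → ML → ML
  | not : ML → ML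
  | dia : ML → ML

/-- `□φ` abbreviates `¬◇¬φ`. -/
def ML.box (φ : ML) : ML := .not (.dia (.not φ))

/-- `φ → ψ` as an abbreviation. -/
def ML.impl (φ ψ : ML) : ML := .not (.and φ (.not ψ))

/-- The signature of a formula: the set of propositional variables occurring in it. -/
def ML.sig : ML → Set ℕ
  | .top => ∅
  | .var p => {p}
  | .and φ ψ => φ.sig ∪ ψ.sig
  | .not φ => φ.sig
  | .dia φ => φ.sig

/-- Uniform substitution of formulas for propositional variables. -/
def ML.subst (s : ℕ → ML) : ML → ML
  | .top => .top
  | .var p => s p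
  | .and φ ψ => .and (φ.subst s) (ψ.subst s)
  | .not φ => .not (φ.subst s)
  | .dia φ => .dia (φ.subst s)

/-- A Kripke model: a nonempty set of worlds, an accessibility relation and a valuation. -/
structure Kripke : Type 1 where
  W : Type
  nonempty : Nonempty W
  R : W → W → Prop
  V : ℕ → Set W

/-- Truth of an ML-formula at a world of a Kripke model. -/
def ML.sat (M : Kripke) : M.W → ML → Prop
  | _, .top => True
  | w, .var p => w ∈ M.V p
  | w, .and φ ψ => ML.sat M w φ ∧ ML.sat M w ψ
  | w, .not φ => ¬ ML.sat M w φ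
  | w, .dia φ => ∃ v, M.R w v ∧ ML.sat M v φ

/-- A formula is valid if it is true at every world of every Kripke model. -/
def ML.valid (φ : ML) : Prop := ∀ (M : Kripke) (w : M.W), ML.sat M w φ

/-- A normal modal logic: a set of ML-formulas containing all valid formulas and
closed under modus ponens, necessitation and uniform substitution. -/
structure NormalLogic : Type 1 where
  F : Set ML
  valid_mem : ∀ φ : ML, φ.valid → φ ∈ F
  mp : ∀ φ ψ : ML, ML.impl φ ψ ∈ F → φ ∈ F → ψ ∈ F
  nec : ∀ φ : ML, φ ∈ F → φ.box ∈ F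
  subst : ∀ (φ : ML) (s : ℕ → ML), φ ∈ F → φ.subst s ∈ F

/-- `M` is a model for the logic `L`: every formula of `L` is true at every world of `M`. -/
def Kripke.IsModelFor (M : Kripke) (L : NormalLogic) : Prop :=
  ∀ φ ∈ L.F, ∀ w : M.W, ML.sat M w φ

/-- Local consequence over the models for `L`. -/
def NormalLogic.entails (L : NormalLogic) (φ ψ : ML) : Prop :=
  ∀ M : Kripke, M.IsModelFor L → ∀ w : M.W, ML.sat M w φ → ML.sat M w ψ

/-- An `L`-interpolant for `φ` and `ψ`. -/
def NormalLogic.Interpolant (L : NormalLogic) (φ ψ χ : ML) : Prop :=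
  χ.sig ⊆ φ.sig ∩ ψ.sig ∧ L.entails φ χ ∧ L.entails χ ψ

/-! ### Auxiliary material -/

noncomputable instance : DecidableEq ML := Classical.decEq _

/-- Conjunction of a list of formulas. -/
def ML.conjList : List ML → ML
  | [] => .top
  | χ :: l => .and χ (ML.conjList l)

lemma ML.sat_conjList (M : Kripke) (w : M.W) :
    ∀ l : List ML, ML.sat M w (ML.conjList l) ↔ ∀ χ ∈ l, ML.sat M w χ
  | [] => by simp [ML.conjList, ML.sat]
  | χ :: l => by
      simp [ML.conjList, ML.sat, ML.sat_conjList M w l]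

lemma ML.sig_conjList (σ : Set ℕ) :
    ∀ l : List ML, (∀ χ ∈ l, χ.sig ⊆ σ) → (ML.conjList l).sig ⊆ σ
  | [] => by intro _; simp [ML.conjList, ML.sig]
  | χ :: l => by
      intro h
      simp only [ML.conjList, ML.sig, Set.union_subset_iff]
      exact ⟨h χ (by simp), ML.sig_conjList σ l fun χ' hχ' => h χ' (by simp [hχ'])⟩

/-- Ultraproduct of a family of Kripke models (without quotienting). -/
def Kripke.uprod {I : Type} (U : Ultrafilter I) (M : I → Kripke) : Kripke where
  W := ∀ i, (M i).W
  nonempty := ⟨fun i => Classical.choice (M i).nonempty⟩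
  R f g := {i | (M i).R (f i) (g i)} ∈ U
  V p := {f | {i | f i ∈ (M i).V p} ∈ U}

/-- Łoś's theorem for modal formulas on the ultraproduct. -/
lemma los {I : Type} (U : Ultrafilter I) (M : I → Kripke) (χ : ML) :
    ∀ f : (Kripke.uprod U M).W,
      ML.sat (Kripke.uprod U M) f χ ↔ {i | ML.sat (M i) (f i) χ} ∈ U := by
  induction χ with
  | top =>
      intro f
      simp only [ML.sat, iff_true]
      show True ↔ _
      simp only [true_iff]
      have : {i | True} = (Set.univ : Set I) := by ext i; simp
      rw [this]
      exact Filter.univ_mem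
  | var p =>
      intro f
      simp [ML.sat, Kripke.uprod]
      exact Iff.rfl
  | and χ₁ χ₂ ih₁ ih₂ =>
      intro f
      show ML.sat _ f χ₁ ∧ ML.sat _ f χ₂ ↔ _
      rw [ih₁ f, ih₂ f]
      constructor
      · rintro ⟨h1, h2⟩
        exact Filter.mem_of_superset (Filter.inter_mem h1 h2) fun i hi => ⟨hi.1, hi.2⟩
      · intro h
        exact ⟨Filter.mem_of_superset h fun i hi => hi.1,
               Filter.mem_of_superset h fun i hi => hi.2⟩
  | not χ ih =>
      intro f
      show ¬ ML.sat _ f χ ↔ _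
      rw [ih f]
      rw [← Ultrafilter.compl_mem_iff_notMem]
      constructor
      · intro h; exact Filter.mem_of_superset h fun i hi => hi
      · intro h; exact Filter.mem_of_superset h fun i hi => hi
  | dia χ ih =>
      intro f
      show (∃ g, (Kripke.uprod U M).R f g ∧ ML.sat _ g χ) ↔ _
      constructor
      · rintro ⟨g, hR, hs⟩
        have hs' := (ih g).mp hs
        exact Filter.mem_of_superset (Filter.inter_mem hR hs')
          fun i hi => ⟨g i, hi.1, hi.2⟩
      · intro h
        classical
        refine ⟨fun i =>
          if hi : ∃ v, (M i).R (f i) v ∧ ML.sat (M i) v χ then hi.choose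
          else Classical.choice (M i).nonempty, ?_, ?_⟩
        · refine Filter.mem_of_superset h fun i hi => ?_
          have hi' : ∃ v, (M i).R (f i) v ∧ ML.sat (M i) v χ := hi
          simp only [Set.mem_setOf_eq]
          rw [dif_pos hi']; exact hi'.choose_spec.1
        · refine (ih _).mpr (Filter.mem_of_superset h fun i hi => ?_)
          have hi' : ∃ v, (M i).R (f i) v ∧ ML.sat (M i) v χ := hi
          simp only [Set.mem_setOf_eq]
          rw [dif_pos hi']; exact hi'.choose_spec.2

/-- Compactness: if every finite subset of `S` is satisfiable at a world of a
model for `L`, then so is all of `S`. -/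
lemma ml_compactness (L : NormalLogic) (S : Set ML)
    (h : ∀ T : Finset ML, ↑T ⊆ S →
      ∃ (M : Kripke) (w : M.W), M.IsModelFor L ∧ ∀ χ ∈ T, ML.sat M w χ) :
    ∃ (M : Kripke) (w : M.W), M.IsModelFor L ∧ ∀ χ ∈ S, ML.sat M w χ := by
  classical
  let I := Finset ↥S
  have himg : ∀ i : I, ↑(i.image (Subtype.val : ↥S → ML)) ⊆ S := by
    intro i χ hχ
    simp only [Finset.coe_image, Set.mem_image, Finset.mem_coe] at hχ
    obtain ⟨⟨χ', hχ'⟩, _, rfl⟩ := hχ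
    exact hχ'
  choose Mi wi hmod hsat using fun i : I => h (i.image Subtype.val) (himg i)
  let U : Ultrafilter I := Ultrafilter.of Filter.atTop
  have hU : ↑U ≤ (Filter.atTop : Filter I) := Ultrafilter.of_le Filter.atTop
  refine ⟨Kripke.uprod U Mi, wi, ?_, ?_⟩
  · intro θ hθ f
    rw [los U Mi θ f]
    have : {i | ML.sat (Mi i) (f i) θ} = Set.univ := by
      ext i; simp [hmod i θ hθ (f i)]
    rw [this]
    exact Filter.univ_mem
  · intro χ hχ
    rw [los U Mi χ wi]
    have hmem : {i : I | (⟨χ, hχ⟩ : ↥S) ∈ i} ∈ (Filter.atTop : Filter I) := by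
      rw [Filter.mem_atTop_sets]
      exact ⟨{⟨χ, hχ⟩}, fun b hb => by
        simp only [Set.mem_setOf_eq]
        exact hb (Finset.mem_singleton_self _)⟩
    refine Filter.mem_of_superset (hU hmem) fun i hi => ?_
    exact hsat i χ (Finset.mem_image_of_mem _ hi)

theorem interpolant_existence_criterion_indistinguishability
    (L : NormalLogic) (φ ψ : ML) (σ : Set ℕ) (hσ : σ = φ.sig ∩ ψ.sig) :
    (¬ ∃ χ : ML, L.Interpolant φ ψ χ) ↔
      ∃ (M₁ M₂ : Kripke) (w₁ : M₁.W) (w₂ : M₂.W),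
        M₁.IsModelFor L ∧ M₂.IsModelFor L ∧
        ML.sat M₁ w₁ φ ∧ ¬ ML.sat M₂ w₂ ψ ∧
        (∀ χ : ML, χ.sig ⊆ σ → (ML.sat M₁ w₁ χ ↔ ML.sat M₂ w₂ χ)) := by
  classical
  constructor
  · intro hno
    -- Step 1: find a model of L with a world satisfying ¬ψ and all σ-consequences of φ.
    have step1 : ∃ (M₂ : Kripke) (w₂ : M₂.W), M₂.IsModelFor L ∧
        (¬ ML.sat M₂ w₂ ψ) ∧
        ∀ χ : ML, χ.sig ⊆ σ → L.entails φ χ → ML.sat M₂ w₂ χ := by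
      have := ml_compactness L
        (insert (ML.not ψ) {χ | χ.sig ⊆ σ ∧ L.entails φ χ}) ?_
      · obtain ⟨M, w, hmod, hsat⟩ := this
        refine ⟨M, w, hmod, hsat (ML.not ψ) (Set.mem_insert _ _), ?_⟩
        intro χ hsig hent
        exact hsat χ (Set.mem_insert_of_mem _ ⟨hsig, hent⟩)
      · intro T hT
        by_contra hno'
        apply hno
        set T' := T.erase (ML.not ψ) with hT'def
        set χ₀ := ML.conjList T'.toList with hχ₀def
        have hT'mem : ∀ χ ∈ T', χ.sig ⊆ σ ∧ L.entails φ χ := by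
          intro χ hχ
          have h1 := Finset.mem_erase.mp hχ
          rcases hT h1.2 with h | h
          · exact absurd h h1.1
          · exact h
        refine ⟨χ₀, ?_, ?_, ?_⟩
        · rw [← hσ]
          exact ML.sig_conjList _ _ fun χ hχ =>
            (hT'mem χ (Finset.mem_toList.mp hχ)).1
        · intro M hM w hφ
          rw [ML.sat_conjList]
          intro χ hχ
          exact (hT'mem χ (Finset.mem_toList.mp hχ)).2 M hM w hφ
        · intro M hM w hχ₀
          by_contra hψ'
          apply hno'
          refine ⟨M, w, hM, fun χ hχ => ?_⟩
          by_cases hc : χ = ML.not ψ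
          · subst hc; exact hψ'
          · exact (ML.sat_conjList M w _).mp hχ₀ χ
              (Finset.mem_toList.mpr (Finset.mem_erase.mpr ⟨hc, hχ⟩))
    obtain ⟨M₂, w₂, hmod₂, hψ₂, hΓ₂⟩ := step1
    -- Step 2: find a model of L with a world satisfying φ and the full σ-theory of w₂.
    have step2 : ∃ (M₁ : Kripke) (w₁ : M₁.W), M₁.IsModelFor L ∧
        ML.sat M₁ w₁ φ ∧
        ∀ χ : ML, χ.sig ⊆ σ → ML.sat M₂ w₂ χ → ML.sat M₁ w₁ χ := by
      have := ml_compactness L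
        (insert φ {χ | χ.sig ⊆ σ ∧ ML.sat M₂ w₂ χ}) ?_
      · obtain ⟨M, w, hmod, hsat⟩ := this
        exact ⟨M, w, hmod, hsat φ (Set.mem_insert _ _),
          fun χ hsig hs => hsat χ (Set.mem_insert_of_mem _ ⟨hsig, hs⟩)⟩
      · intro T hT
        by_contra hno'
        set T' := T.erase φ with hT'def
        set δ := ML.conjList T'.toList with hδdef
        have hT'mem : ∀ χ ∈ T', χ.sig ⊆ σ ∧ ML.sat M₂ w₂ χ := by
          intro χ hχ
          have h1 := Finset.mem_erase.mp hχ
          rcases hT h1.2 with h | h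
          · exact absurd h h1.1
          · exact h
        have hent : L.entails φ (ML.not δ) := by
          intro M hM w hφ
          show ¬ ML.sat M w δ
          intro hδ
          apply hno'
          refine ⟨M, w, hM, fun χ hχ => ?_⟩
          by_cases hc : χ = φ
          · subst hc; exact hφ
          · exact (ML.sat_conjList M w _).mp hδ χ
              (Finset.mem_toList.mpr (Finset.mem_erase.mpr ⟨hc, hχ⟩))
        have hsig : (ML.not δ).sig ⊆ σ := by
          show δ.sig ⊆ σ
          exact ML.sig_conjList _ _ fun χ hχ =>
            (hT'mem χ (Finset.mem_toList.mp hχ)).1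
        have hsat2 : ML.sat M₂ w₂ (ML.not δ) := hΓ₂ _ hsig hent
        apply hsat2
        rw [ML.sat_conjList]
        intro χ hχ
        exact (hT'mem χ (Finset.mem_toList.mp hχ)).2
    obtain ⟨M₁, w₁, hmod₁, hφ₁, hΔ₁⟩ := step2
    refine ⟨M₁, M₂, w₁, w₂, hmod₁, hmod₂, hφ₁, hψ₂, fun χ hsig => ?_⟩
    constructor
    · intro h1
      by_contra h2
      exact hΔ₁ (ML.not χ) hsig h2 h1
    · intro h2
      exact hΔ₁ χ hsig h2
  · rintro ⟨M₁, M₂, w₁, w₂, h1, h2, hφ, hψ, heq⟩ ⟨χ, hsig, he1, he2⟩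
    have s1 : ML.sat M₁ w₁ χ := he1 M₁ h1 w₁ hφ
    have s2 : ML.sat M₂ w₂ χ := (heq χ (by rw [hσ]; exact hsig)).mp s1
    exact hψ (he2 M₂ h2 w₂ s2)
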